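/- Let p < 1/2 (so q > 1/2). Then there exists a sequence (A_n)_{n≥2} with 0 < A_n < 1 for all n and A_n → 0 as n → ∞, such that for every n ≥ 2 and every y ∈ [A_n, 1], 0 ≤ ∏_{i=1}^n f(G^{i−1}(y)) ≤ (1/(2q))^n, where G^{i−1} denotes the (i−1)-fold iterate of G. -/

import Mathlib

open Set Filter Topology

set_option maxHeartbeats 1000000

/-- G(t) = t(t + 2q(1−t)). -/
noncomputable def G (q : ℝ) (t : ℝ) : ℝ := t * (t + 2*q*(1 - t))

/-- f(t) = 2p·t + 2q·(1−t). -/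
noncomputable def f (p q : ℝ) (t : ℝ) : ℝ := 2*p*t + 2*q*(1 - t)

lemma aux_G_mem (q t : ℝ) (h2q : 1 ≤ 2*q) (hq2 : q ≤ 1) (h : t ∈ Set.Icc (0:ℝ) 1) :
    G q t ∈ Set.Icc (0:ℝ) 1 := by
  obtain ⟨h0, h1⟩ := h
  constructor
  · have : 0 ≤ t + 2*q*(1-t) := by nlinarith
    exact mul_nonneg h0 this
  · simp only [G]
    nlinarith [mul_nonneg (sub_nonneg.2 h1) (sub_nonneg.2 h1),
      mul_nonneg (mul_nonneg (sub_nonneg.2 h1) h0) (by linarith : (0:ℝ) ≤ 2 - 2*q)]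

lemma aux_G_ge (q t : ℝ) (h2q : 1 ≤ 2*q) (h : t ∈ Set.Icc (0:ℝ) 1) : t ≤ G q t := by
  obtain ⟨h0, h1⟩ := h
  simp only [G]
  nlinarith [mul_nonneg (mul_nonneg h0 (sub_nonneg.2 h1)) (by linarith : (0:ℝ) ≤ 2*q-1)]

lemma aux_G_gain (q c L t : ℝ) (h2q : 1 ≤ 2*q) (hL : L = 2*q - (2*q-1)*c)
    (h0 : 0 ≤ t) (h1 : t ≤ c) : L * t ≤ G q t := by
  subst hL
  simp only [G]
  nlinarith [mul_nonneg (mul_nonneg h0 (sub_nonneg.2 h1)) (by linarith : (0:ℝ) ≤ 2*q-1)]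

lemma aux_f_nonneg (p q t : ℝ) (hp : 0 ≤ p) (hq : 0 ≤ q) (h : t ∈ Set.Icc (0:ℝ) 1) :
    0 ≤ f p q t := by
  obtain ⟨h0, h1⟩ := h
  have h2 : 0 ≤ 2*p*t := by positivity
  have h3 : 0 ≤ 2*q*(1-t) := by nlinarith
  simp only [f]; linarith

lemma aux_f_le (p q t : ℝ) (hp : 0 ≤ p) (hpq : p + q = 1) (h2q : 1 ≤ 2*q)
    (h : t ∈ Set.Icc (0:ℝ) 1) : f p q t ≤ 2*q := by
  obtain ⟨h0, h1⟩ := h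
  simp only [f]
  nlinarith

lemma aux_f_le_c (p q s c t : ℝ) (hpq : p + q = 1) (h2q : 1 < 2*q)
    (hceq : c * (4*q*(2*q-1)) = 4*q^2 - s) (hct : c ≤ t) (ht1 : t ≤ 1) :
    f p q t ≤ s/(2*q) := by
  have hpq' : p = 1 - q := by linarith
  subst hpq'
  rw [le_div_iff₀ (by linarith : (0:ℝ) < 2*q)]
  simp only [f]
  nlinarith [mul_nonneg (sub_nonneg.2 hct) (by nlinarith : (0:ℝ) ≤ 4*q*(2*q-1))]

/-- for p < 1/2, there is a sequence (A_n)_{n≥2} with 0 < A_n < 1, A_n → 0,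
such that for every n ≥ 2 and y ∈ [A_n, 1], 0 ≤ ∏_{i=1}^n f(G^{i−1}(y)) ≤ (1/(2q))^n. -/
theorem density_bound_near_one (p q : ℝ) (hp : 0 ≤ p) (hpq : p + q = 1) (hp' : p < 1/2) :
    ∃ A : ℕ → ℝ,
      (∀ n : ℕ, 2 ≤ n → 0 < A n ∧ A n < 1) ∧
      Tendsto A atTop (𝓝 0) ∧
      (∀ n : ℕ, 2 ≤ n → ∀ y ∈ Set.Icc (A n) 1,
        0 ≤ ∏ i ∈ Finset.range n, f p q ((G q)^[i] y) ∧
        ∏ i ∈ Finset.range n, f p q ((G q)^[i] y) ≤ (1/(2*q))^n) := by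
  have hq : 1/2 < q := by linarith
  have hq2 : q ≤ 1 := by linarith
  have h2q : 1 < 2*q := by linarith
  have hq0 : 0 < q := by linarith
  have hr0 : 0 ≤ 4*p*q := by positivity
  have hr1 : 4*p*q < 1 := by nlinarith [sq_nonneg (p - q)]
  set s : ℝ := (1+4*p*q)/2 with hs
  have hs0 : 0 < s := by rw [hs]; linarith
  have hs1 : s < 1 := by rw [hs]; linarith
  have hrs : 4*p*q < s := by rw [hs]; linarith
  have hden : 0 < 4*q*(2*q-1) := by nlinarith
  set c : ℝ := (4*q^2 - s)/(4*q*(2*q-1)) with hc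
  have hc0 : 0 < c := div_pos (by nlinarith) hden
  have hc1 : c < 1 := by
    rw [hc, div_lt_one hden]
    nlinarith
  have hceq : c * (4*q*(2*q-1)) = 4*q^2 - s := div_mul_cancel₀ _ (ne_of_gt hden)
  set L : ℝ := 2*q - (2*q-1)*c with hL
  have hL1 : 1 < L := by rw [hL]; nlinarith
  have hL0 : 0 < L := by linarith
  clear_value s c L
  clear hc hs
  -- pick K with s^K < 1/4
  obtain ⟨K, hK⟩ := exists_pow_lt_of_lt_one (by norm_num : (0:ℝ) < 1/4) hs1
  have hbase : (2*q)^2 * s^K ≤ 1 := by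
    have h1 : (2*q)^2 ≤ 4 := by nlinarith
    have h2 : 0 ≤ s^K := by positivity
    nlinarith
  set m : ℕ → ℕ := fun n => n / (K+1) with hm
  refine ⟨fun n => c * (1/L)^(m n), ?_, ?_, ?_⟩
  · intro n _
    constructor
    · positivity
    · have h1 : (1/L)^(m n) ≤ 1 := pow_le_one₀ (by positivity) (by rw [div_le_one hL0]; linarith)
      calc c * (1/L)^(m n) ≤ c * 1 := by nlinarith
        _ < 1 := by linarith
  · have h1 : Tendsto m atTop atTop := by
      rw [tendsto_atTop_atTop]
      intro b
      exact ⟨b*(K+1), fun n hn => (Nat.le_div_iff_mul_le (Nat.succ_pos K)).2 hn⟩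
    have h2 : Tendsto (fun j : ℕ => c * (1/L)^j) atTop (𝓝 0) := by
      have := tendsto_pow_atTop_nhds_zero_of_lt_one (by positivity : (0:ℝ) ≤ 1/L)
        (by rw [div_lt_one hL0]; linarith)
      simpa using this.const_mul c
    exact h2.comp h1
  · intro n hn y hy
    obtain ⟨hyA, hy1⟩ := hy
    set M := m n with hM
    have hy0 : 0 < y := lt_of_lt_of_le (by positivity) hyA
    have hyIcc : y ∈ Icc (0:ℝ) 1 := ⟨hy0.le, hy1⟩
    have hMn : M ≤ n := Nat.div_le_self n (K+1)
    have iter_mem : ∀ i, (G q)^[i] y ∈ Icc (0:ℝ) 1 := by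
      intro i
      induction i with
      | zero => simpa using hyIcc
      | succ i ih => rw [Function.iterate_succ_apply']; exact aux_G_mem q _ h2q.le hq2 ih
    have iter_low : ∀ i, min c (L^i * y) ≤ (G q)^[i] y := by
      intro i
      induction i with
      | zero => simpa using min_le_right c y
      | succ i ih =>
        rw [Function.iterate_succ_apply']
        set t := (G q)^[i] y with ht
        rcases le_or_gt c t with hct | hct
        · exact le_trans (min_le_left _ _) (le_trans hct (aux_G_ge q t h2q.le (iter_mem i)))
        · have h1 : L * t ≤ G q t := aux_G_gain q c L t h2q.le hL (iter_mem i).1 hct.le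
          have h2 : L * min c (L^i * y) ≤ L * t := mul_le_mul_of_nonneg_left ih hL0.le
          rcases min_cases c (L^i * y) with ⟨he, hle⟩ | ⟨he, hle⟩
          · rw [he] at h2
            have h3 : c ≤ L * c := by
              calc c = 1*c := (one_mul c).symm
                _ ≤ L*c := mul_le_mul_of_nonneg_right hL1.le hc0.le
            exact le_trans (min_le_left _ _) (le_trans (le_trans h3 h2) h1)
          · rw [he] at h2
            calc min c (L^(i+1) * y) ≤ L^(i+1) * y := min_le_right _ _
              _ = L * (L^i * y) := by ring
              _ ≤ L * t := h2
              _ ≤ G q t := h1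
    have iter_ge_c : ∀ i, M ≤ i → c ≤ (G q)^[i] y := by
      intro i hi
      refine le_trans (le_min le_rfl ?_) (iter_low i)
      have h1 : L^M * (c * (1/L)^M) = c := by
        field_simp
        rw [← mul_pow, mul_one_div_cancel hL0.ne', one_pow]
      have h2 : L^M ≤ L^i := pow_le_pow_right₀ hL1.le hi
      have h3 : L^M * (c * (1/L)^M) ≤ L^i * y := by
        apply mul_le_mul h2 hyA (by positivity) (by positivity)
      linarith [h1 ▸ h3]
    constructor
    · exact Finset.prod_nonneg fun i _ => aux_f_nonneg p q _ hp hq0.le (iter_mem i)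
    · have step : ∏ i ∈ Finset.range n, f p q ((G q)^[i] y)
          ≤ ∏ i ∈ Finset.range n, (if i < M then 2*q else s/(2*q)) := by
        apply Finset.prod_le_prod
        · intro i _; exact aux_f_nonneg p q _ hp hq0.le (iter_mem i)
        · intro i _
          by_cases hi : i < M
          · simp only [hi, if_true]
            exact aux_f_le p q _ hp hpq h2q.le (iter_mem i)
          · simp only [hi, if_false]
            exact aux_f_le_c p q s c _ hpq h2q hceq (iter_ge_c i (not_lt.1 hi)) (iter_mem i).2
      have e1 : (∏ i ∈ Finset.Ico 0 M, (if i < M then (2*q:ℝ) else s/(2*q))) = (2*q)^M := by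
        have h : ∀ i ∈ Finset.Ico 0 M, (if i < M then (2*q:ℝ) else s/(2*q)) = 2*q := by
          intro i hi; simp only [Finset.mem_Ico] at hi; simp [hi.2]
        rw [Finset.prod_congr rfl h, Finset.prod_const, Nat.card_Ico, Nat.sub_zero]
      have e2 : (∏ i ∈ Finset.Ico M n, (if i < M then (2*q:ℝ) else s/(2*q))) = (s/(2*q))^(n-M) := by
        have h : ∀ i ∈ Finset.Ico M n, (if i < M then (2*q:ℝ) else s/(2*q)) = s/(2*q) := by
          intro i hi; simp only [Finset.mem_Ico] at hi; simp [Nat.not_lt.2 hi.1]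
        rw [Finset.prod_congr rfl h, Finset.prod_const, Nat.card_Ico]
      have prod_eq : ∏ i ∈ Finset.range n, (if i < M then 2*q else s/(2*q))
          = (2*q)^M * (s/(2*q))^(n - M) := by
        rw [Finset.range_eq_Ico, ← Finset.prod_Ico_consecutive _ (Nat.zero_le M) hMn, e1, e2]
      have final : (2*q)^M * (s/(2*q))^(n - M) ≤ (1/(2*q))^n := by
        have h2q0 : (0:ℝ) < 2*q := by linarith
        have hKM : K * M ≤ n - M := by
          have h1 : M * (K+1) ≤ n := Nat.div_mul_le_self n (K+1)
          exact Nat.le_sub_of_add_le (le_of_eq_of_le (by ring : K*M + M = M*(K+1)) h1)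
        have hsK : s^(n-M) ≤ s^(K*M) := pow_le_pow_of_le_one hs0.le hs1.le hKM
        have key : (2*q)^(2*M) * s^(n-M) ≤ 1 := by
          calc (2*q)^(2*M) * s^(n-M) ≤ (2*q)^(2*M) * s^(K*M) :=
                mul_le_mul_of_nonneg_left hsK (by positivity)
            _ = ((2*q)^2 * s^K)^M := by rw [pow_mul, pow_mul, ← mul_pow]
            _ ≤ 1^M := pow_le_pow_left₀ (by positivity) hbase M
            _ = 1 := one_pow M
        rw [div_pow, div_pow, one_pow, ← mul_div_assoc,
          div_le_div_iff₀ (by positivity) (by positivity)]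
        have hsplit : (2*q)^n = (2*q)^(n-M) * (2*q)^M := by
          rw [← pow_add]
          congr 1
          omega
        calc (2*q)^M * s^(n-M) * (2*q)^n = ((2*q)^(2*M) * s^(n-M)) * (2*q)^(n-M) := by
              rw [hsplit]; ring
          _ ≤ 1 * (2*q)^(n-M) := mul_le_mul_of_nonneg_right key (by positivity)
          _ = 1 * (2*q)^(n-M) := rfl
      calc ∏ i ∈ Finset.range n, f p q ((G q)^[i] y)
          ≤ ∏ i ∈ Finset.range n, (if i < M then 2*q else s/(2*q)) := step
        _ = (2*q)^M * (s/(2*q))^(n - M) := prod_eq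
        _ ≤ (1/(2*q))^n := final
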